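/- Let 0 < s < 1. Then there exists a constant C_s > 0 such that for every real L ≥ 1 and every k ∈ ℤ², ∑_{u ∈ ℤ², 1+|u|² ≤ L²} (1+|u+k|²)^{−s} (1+|u|²)^{−s} ≤ C_s · L^{2−2s} · ⟨k⟩^{−2s}. -/

import Mathlib

open scoped ENNReal

/-- Squared Euclidean norm on `ℤ²`. -/
noncomputable def nsq (p : ℤ × ℤ) : ℝ := (p.1 : ℝ) ^ 2 + (p.2 : ℝ) ^ 2

private lemma tck_bern (s : ℝ) (hs0 : 0 < s) (hs1 : s < 1) (m : ℕ) :
    (m:ℝ)^(1-s) + (1-s) * ((m:ℝ)+1)^(-s) ≤ ((m:ℝ)+1)^(1-s) := by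
  have hm1 : (0:ℝ) < (m:ℝ) + 1 := by positivity
  have ht : (0:ℝ) ≤ (m:ℝ) / ((m:ℝ)+1) := by positivity
  have key : ((m:ℝ)/((m:ℝ)+1)) ^ (1-s) * (1:ℝ) ^ s ≤ (1-s) * ((m:ℝ)/((m:ℝ)+1)) + s * 1 :=
    Real.geom_mean_le_arith_mean2_weighted (by linarith) hs0.le ht zero_le_one (by ring)
  rw [Real.one_rpow, mul_one, mul_one] at key
  have hquot : ((m:ℝ)/((m:ℝ)+1)) ^ (1-s) * ((m:ℝ)+1) ^ (1-s) = (m:ℝ)^(1-s) := by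
    rw [← Real.mul_rpow ht hm1.le, div_mul_cancel₀]
    exact hm1.ne'
  have key2 : (m:ℝ)^(1-s) ≤ ((1-s) * ((m:ℝ)/((m:ℝ)+1)) + s) * ((m:ℝ)+1) ^ (1-s) := by
    rw [← hquot]
    exact mul_le_mul_of_nonneg_right key (Real.rpow_nonneg hm1.le _)
  have hsplit : ((m:ℝ)+1) ^ (1-s) = ((m:ℝ)+1) * ((m:ℝ)+1) ^ (-s) := by
    rw [← Real.rpow_one_add' hm1.le (by intro h; linarith : (1:ℝ) + -s ≠ 0)]
    ring_nf
  rw [hsplit] at key2 ⊢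
  have hpos : (0:ℝ) < ((m:ℝ)+1) ^ (-s) := Real.rpow_pos_of_pos hm1 _
  have heq : ((1-s) * ((m:ℝ)/((m:ℝ)+1)) + s) * (((m:ℝ)+1) * ((m:ℝ)+1) ^ (-s))
      = ((1-s) * (m:ℝ) + s * ((m:ℝ)+1)) * ((m:ℝ)+1)^(-s) := by
    field_simp
  rw [heq] at key2
  nlinarith [key2, hpos]

private lemma tck_sum_pow (s : ℝ) (hs0 : 0 < s) (hs1 : s < 1) (M : ℕ) :
    ∑ n ∈ Finset.range M, ((n:ℝ)+1)^(-s) ≤ (M:ℝ)^(1-s)/(1-s) := by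
  have h1s : (0:ℝ) < 1 - s := by linarith
  induction M with
  | zero => simp [Real.zero_rpow (by intro h; linarith : (1:ℝ)-s ≠ 0)]
  | succ m ih =>
    rw [Finset.sum_range_succ]
    have hb := tck_bern s hs0 hs1 m
    have h2 : (1-s) * (∑ n ∈ Finset.range m, ((n:ℝ)+1)^(-s)) ≤ (m:ℝ)^(1-s) := by
      calc (1-s) * (∑ n ∈ Finset.range m, ((n:ℝ)+1)^(-s)) ≤ (1-s) * ((m:ℝ)^(1-s)/(1-s)) := by
            exact mul_le_mul_of_nonneg_left ih h1s.le
        _ = (m:ℝ)^(1-s) := by field_simp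
    push_cast
    rw [le_div_iff₀ h1s]
    nlinarith

private lemma tck_oneD (s : ℝ) (hs0 : 0 < s) (hs1 : s < 1) (M : ℕ) :
    ∑ n ∈ Finset.Icc (-(M:ℤ)) (M:ℤ), (1+(n:ℝ)^2)^(-(s/2)) ≤ 1 + 2/(1-s) * (M:ℝ)^(1-s) := by
  have h1s : (0:ℝ) < 1 - s := by linarith
  set f : ℤ → ℝ := fun n => (1+(n:ℝ)^2)^(-(s/2)) with hf
  have hfnn : ∀ n, 0 ≤ f n := fun n => Real.rpow_nonneg (by positivity) _
  have hfeven : ∀ n, f (-n) = f n := by intro n; simp [hf]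
  have hf0 : f 0 = 1 := by simp [hf]
  have hpos : ∑ n ∈ Finset.Icc (1:ℤ) (M:ℤ), f n ≤ (M:ℝ)^(1-s)/(1-s) := by
    have step1 : ∑ n ∈ Finset.Icc (1:ℤ) (M:ℤ), f n ≤ ∑ n ∈ Finset.Icc (1:ℤ) (M:ℤ), (n:ℝ)^(-s) := by
      apply Finset.sum_le_sum
      intro n hn
      rw [Finset.mem_Icc] at hn
      have hn1 : (1:ℝ) ≤ (n:ℝ) := by exact_mod_cast hn.1
      have hnpos : (0:ℝ) < n := by linarith
      have h1 : f n ≤ ((n:ℝ)^2)^(-(s/2)) := by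
        apply Real.rpow_le_rpow_of_nonpos (by positivity) (by nlinarith) (by linarith)
      have h2 : ((n:ℝ)^2)^(-(s/2)) = (n:ℝ)^(-s) := by
        rw [← Real.rpow_natCast (n:ℝ) 2, ← Real.rpow_mul hnpos.le]
        norm_num
        congr 1; ring
      rw [h2] at h1; exact h1
    have step2 : ∑ n ∈ Finset.Icc (1:ℤ) (M:ℤ), (n:ℝ)^(-s)
        = ∑ j ∈ Finset.range M, ((j:ℝ)+1)^(-s) := by
      refine Finset.sum_nbij' (fun n => (n-1).toNat) (fun j => (j:ℤ)+1) ?_ ?_ ?_ ?_ ?_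
      · intro a ha; rw [Finset.mem_Icc] at ha; rw [Finset.mem_range]; omega
      · intro a ha; rw [Finset.mem_range] at ha; rw [Finset.mem_Icc]; omega
      · intro a ha; rw [Finset.mem_Icc] at ha; omega
      · intro a _; omega
      · intro a ha
        rw [Finset.mem_Icc] at ha
        congr 1
        exact_mod_cast (by omega : a = ((a - 1).toNat : ℤ) + 1)
    calc _ ≤ _ := step1
      _ = _ := step2
      _ ≤ _ := tck_sum_pow s hs0 hs1 M
  have hsub : Finset.Icc (-(M:ℤ)) (M:ℤ) ⊆
      (Finset.Icc (1:ℤ) (M:ℤ)).image Neg.neg ∪ Finset.Icc (0:ℤ) (M:ℤ) := by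
    intro n hn
    rw [Finset.mem_Icc] at hn
    rw [Finset.mem_union, Finset.mem_image, Finset.mem_Icc]
    rcases le_or_gt 0 n with h | h
    · right; omega
    · left; exact ⟨-n, by rw [Finset.mem_Icc]; omega, by omega⟩
  have h1 : ∑ n ∈ Finset.Icc (-(M:ℤ)) (M:ℤ), f n ≤
      ∑ n ∈ (Finset.Icc (1:ℤ) (M:ℤ)).image Neg.neg ∪ Finset.Icc (0:ℤ) (M:ℤ), f n :=
    Finset.sum_le_sum_of_subset_of_nonneg hsub (fun i _ _ => hfnn i)
  have h2 : ∑ n ∈ (Finset.Icc (1:ℤ) (M:ℤ)).image Neg.neg ∪ Finset.Icc (0:ℤ) (M:ℤ), f n ≤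
      ∑ n ∈ (Finset.Icc (1:ℤ) (M:ℤ)).image Neg.neg, f n + ∑ n ∈ Finset.Icc (0:ℤ) (M:ℤ), f n := by
    have := Finset.sum_union_inter (s₁ := (Finset.Icc (1:ℤ) (M:ℤ)).image Neg.neg)
      (s₂ := Finset.Icc (0:ℤ) (M:ℤ)) (f := f)
    have hnn : 0 ≤ ∑ n ∈ (Finset.Icc (1:ℤ) (M:ℤ)).image Neg.neg ∩ Finset.Icc (0:ℤ) (M:ℤ), f n :=
      Finset.sum_nonneg (fun i _ => hfnn i)
    linarith
  have h3 : ∑ n ∈ (Finset.Icc (1:ℤ) (M:ℤ)).image Neg.neg, f n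
      = ∑ n ∈ Finset.Icc (1:ℤ) (M:ℤ), f n := by
    rw [Finset.sum_image (by intro a _ b _ h; omega)]
    exact Finset.sum_congr rfl (fun n _ => hfeven n)
  have h4 : ∑ n ∈ Finset.Icc (0:ℤ) (M:ℤ), f n = 1 + ∑ n ∈ Finset.Icc (1:ℤ) (M:ℤ), f n := by
    have hins : Finset.Icc (0:ℤ) (M:ℤ) = insert 0 (Finset.Icc (1:ℤ) (M:ℤ)) := by
      ext n; simp [Finset.mem_Icc]; omega
    rw [hins, Finset.sum_insert (by simp), hf0]
  have hrw : 2/(1-s) * (M:ℝ)^(1-s) = 2 * ((M:ℝ)^(1-s)/(1-s)) := by ring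
  rw [hrw]
  linarith

private lemma tck_split2 (s : ℝ) (hs0 : 0 < s) (a b : ℝ) (ha : 0 ≤ a) (hb : 0 ≤ b) :
    (1+a+b)^(-s) ≤ (1+a)^(-(s/2)) * (1+b)^(-(s/2)) := by
  have hA : (0:ℝ) < 1+a := by linarith
  have hB : (0:ℝ) < 1+b := by linarith
  have hC : (0:ℝ) < 1+a+b := by linarith
  have key : ((1+a)*(1+b))^(s/2) ≤ (1+a+b)^s := by
    have hle : (1+a)*(1+b) ≤ (1+a+b)^2 := by nlinarith
    calc ((1+a)*(1+b))^(s/2) ≤ ((1+a+b)^2)^(s/2) :=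
          Real.rpow_le_rpow (by positivity) hle (by positivity)
      _ = (1+a+b)^s := by
          rw [← Real.rpow_natCast (1+a+b) 2, ← Real.rpow_mul hC.le]
          norm_num
          congr 1; ring
  have hposL : (0:ℝ) < ((1+a)*(1+b))^(s/2) := Real.rpow_pos_of_pos (by positivity) _
  have hinv : ((1+a+b)^s)⁻¹ ≤ (((1+a)*(1+b))^(s/2))⁻¹ := inv_anti₀ hposL key
  rw [Real.rpow_neg hC.le, Real.rpow_neg hA.le, Real.rpow_neg hB.le]
  rw [Real.mul_rpow hA.le hB.le, mul_inv] at hinv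
  exact hinv

private lemma tck_case_one (s : ℝ) (hs0 : 0 < s) (A B K : ℝ) (hA : 1 ≤ A) (hB : 1 ≤ B)
    (hK : 1 ≤ K) (h4 : K ≤ 4*A) :
    A^(-s) * B^(-s) ≤ 4^s * K^(-s) * (A^(-s) + B^(-s)) := by
  have hApos : (0:ℝ) < A := by linarith
  have hBpos : (0:ℝ) < B := by linarith
  have hKpos : (0:ℝ) < K := by linarith
  have hK4 : (0:ℝ) < K/4 := by linarith
  have h1 : A^(-s) ≤ (K/4)^(-s) :=
    Real.rpow_le_rpow_of_nonpos hK4 (by linarith) (by linarith)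
  have h2 : (K/4)^(-s) = 4^s * K^(-s) := by
    rw [Real.div_rpow hKpos.le (by norm_num : (0:ℝ) ≤ 4), Real.rpow_neg (by norm_num : (0:ℝ) ≤ 4),
      div_inv_eq_mul, mul_comm]
  rw [h2] at h1
  have hBnn : (0:ℝ) ≤ B^(-s) := Real.rpow_nonneg hBpos.le _
  have hAnn : (0:ℝ) ≤ A^(-s) := Real.rpow_nonneg hApos.le _
  have hcnn : (0:ℝ) ≤ 4^s * K^(-s) := by
    have h41 : (0:ℝ) ≤ (4:ℝ)^s := Real.rpow_nonneg (by norm_num) _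
    have h42 := Real.rpow_nonneg hKpos.le (-s)
    positivity
  calc A^(-s) * B^(-s) ≤ (4^s * K^(-s)) * B^(-s) := mul_le_mul_of_nonneg_right h1 hBnn
    _ ≤ 4^s * K^(-s) * (A^(-s) + B^(-s)) := by nlinarith

private lemma tck_mainpt (s : ℝ) (hs0 : 0 < s) (A B K : ℝ) (hA : 1 ≤ A) (hB : 1 ≤ B) (hK : 1 ≤ K)
    (hsum : K ≤ 2*(A+B)) :
    A^(-s) * B^(-s) ≤ 4^s * K^(-s) * (A^(-s) + B^(-s)) := by
  rcases le_total B A with h | h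
  · exact tck_case_one s hs0 A B K hA hB hK (by linarith)
  · have := tck_case_one s hs0 B A K hB hA hK (by linarith)
    rw [mul_comm (B^(-s))] at this
    linarith

set_option maxHeartbeats 2000000 in
/-- Truncated convolution-kernel bound: for `0 < s < 1`,
`∑_{u : 1+|u|² ≤ L²} (1+|u+k|²)^{-s} (1+|u|²)^{-s} ≤ C_s L^{2-2s} ⟨k⟩^{-2s}`. -/
theorem truncated_convolution_kernel_bound (s : ℝ) (hs0 : 0 < s) (hs1 : s < 1) :
    ∃ C : ℝ, 0 < C ∧ ∀ L : ℝ, 1 ≤ L → ∀ k : ℤ × ℤ,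
      ∑' u : {u : ℤ × ℤ // 1 + nsq u ≤ L ^ 2},
        ENNReal.ofReal ((1 + nsq (u.1 + k)) ^ (-s) * (1 + nsq u.1) ^ (-s)) ≤
      ENNReal.ofReal (C * L ^ (2 - 2 * s) * (1 + nsq k) ^ (-s)) := by
  have h1s : (0:ℝ) < 1 - s := by linarith
  have hC₁pos : (0:ℝ) < 1 + 2/(1-s) := by
    have : (0:ℝ) ≤ 2/(1-s) := div_nonneg (by norm_num) h1s.le
    linarith
  have h4s : (0:ℝ) < (4:ℝ)^s := Real.rpow_pos_of_pos (by norm_num) _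
  refine ⟨(4:ℝ)^s * (2*(1 + 2/(1-s))^2 + 9), by positivity, ?_⟩
  intro L hL k
  have hL0 : (0:ℝ) < L := by linarith
  set M : ℕ := ⌊L⌋.toNat with hM
  have hfl : (0:ℤ) ≤ ⌊L⌋ := Int.floor_nonneg.mpr hL0.le
  have hMfl : (M:ℤ) = ⌊L⌋ := Int.toNat_of_nonneg hfl
  have hML : (M:ℝ) ≤ L := by
    have := Int.floor_le L
    rw [← hMfl] at this
    exact_mod_cast this
  have hLM : L < (M:ℝ) + 1 := by
    have := Int.lt_floor_add_one L
    rw [← hMfl] at this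
    exact_mod_cast this
  -- nsq facts
  have hnsq : ∀ v : ℤ × ℤ, 0 ≤ nsq v := by intro v; unfold nsq; positivity
  -- box membership
  have hbox : ∀ v : ℤ × ℤ, 1 + nsq v ≤ L^2 →
      v.1 ∈ Finset.Icc (-(M:ℤ)) (M:ℤ) ∧ v.2 ∈ Finset.Icc (-(M:ℤ)) (M:ℤ) := by
    intro v hv
    unfold nsq at hv
    constructor
    · rw [Finset.mem_Icc]
      have hsq : ((v.1:ℝ))^2 ≤ L^2 := by nlinarith [sq_nonneg ((v.2:ℝ))]
      have hup : (v.1:ℝ) ≤ L := by nlinarith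
      have hdn : -L ≤ (v.1:ℝ) := by nlinarith
      have hupz : v.1 < (M:ℤ) + 1 := by exact_mod_cast lt_of_le_of_lt hup hLM
      have hdnz : -((M:ℤ) + 1) < v.1 := by
        have : -((M:ℝ)+1) < (v.1:ℝ) := by linarith
        exact_mod_cast this
      omega
    · rw [Finset.mem_Icc]
      have hsq : ((v.2:ℝ))^2 ≤ L^2 := by nlinarith [sq_nonneg ((v.1:ℝ))]
      have hup : (v.2:ℝ) ≤ L := by nlinarith
      have hdn : -L ≤ (v.2:ℝ) := by nlinarith
      have hupz : v.2 < (M:ℤ) + 1 := by exact_mod_cast lt_of_le_of_lt hup hLM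
      have hdnz : -((M:ℤ) + 1) < v.2 := by
        have : -((M:ℝ)+1) < (v.2:ℝ) := by linarith
        exact_mod_cast this
      omega
  -- ENNReal functions
  set S : Set (ℤ × ℤ) := {u | 1 + nsq u ≤ L^2} with hS
  set E : ℤ × ℤ → ℝ≥0∞ := fun v => ENNReal.ofReal ((1 + nsq v) ^ (-s)) with hE
  set φ : ℤ → ℝ≥0∞ := fun n => ENNReal.ofReal ((1+(n:ℝ)^2) ^ (-(s/2))) with hφ
  set ψ : ℤ → ℝ≥0∞ := fun n => if n ∈ Finset.Icc (-(M:ℤ)) (M:ℤ) then φ n else 0 with hψ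
  set χ : ℤ → ℤ → ℝ≥0∞ :=
    fun a n => if n ∈ Finset.Icc (a-(M:ℤ)) (a+(M:ℤ)) then 1 else 0 with hχ
  set cL : ℝ≥0∞ := ENNReal.ofReal ((L^2)^(-s)) with hcL
  set cK : ℝ≥0∞ := ENNReal.ofReal ((4:ℝ)^s * (1 + nsq k)^(-s)) with hcK
  -- pointwise: E v ≤ φ v.1 * φ v.2
  have hEφ : ∀ v : ℤ × ℤ, E v ≤ φ v.1 * φ v.2 := by
    intro v
    rw [hE, hφ]
    dsimp only
    rw [← ENNReal.ofReal_mul (Real.rpow_nonneg (by positivity) _)]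
    apply ENNReal.ofReal_le_ofReal
    unfold nsq
    rw [← add_assoc]
    exact tck_split2 s hs0 _ _ (sq_nonneg _) (sq_nonneg _)
  -- ψ bound pointwise when in box
  have hEψ : ∀ v : ℤ × ℤ, 1 + nsq v ≤ L^2 → E v ≤ ψ v.1 * ψ v.2 := by
    intro v hv
    obtain ⟨h1, h2⟩ := hbox v hv
    rw [hψ]
    dsimp only
    rw [if_pos h1, if_pos h2]
    exact hEφ v
  -- main pointwise inequality
  have hFpt : ∀ u : ℤ × ℤ,
      ENNReal.ofReal ((1 + nsq (u + k)) ^ (-s) * (1 + nsq u) ^ (-s)) ≤ cK * (E (u+k) + E u) := by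
    intro u
    have hA : (1:ℝ) ≤ 1 + nsq (u+k) := by linarith [hnsq (u+k)]
    have hB : (1:ℝ) ≤ 1 + nsq u := by linarith [hnsq u]
    have hK : (1:ℝ) ≤ 1 + nsq k := by linarith [hnsq k]
    have hsum : 1 + nsq k ≤ 2*((1 + nsq (u+k)) + (1 + nsq u)) := by
      unfold nsq
      have e1 : ((u+k).1 : ℝ) = (u.1 : ℝ) + (k.1 : ℝ) := by push_cast [Prod.fst_add]; ring
      have e2 : ((u+k).2 : ℝ) = (u.2 : ℝ) + (k.2 : ℝ) := by push_cast [Prod.snd_add]; ring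
      rw [e1, e2]
      nlinarith [sq_nonneg (2*(u.1:ℝ)+(k.1:ℝ)), sq_nonneg (2*(u.2:ℝ)+(k.2:ℝ))]
    have hreal := tck_mainpt s hs0 _ _ _ hA hB hK hsum
    calc ENNReal.ofReal ((1 + nsq (u + k)) ^ (-s) * (1 + nsq u) ^ (-s))
        ≤ ENNReal.ofReal ((4:ℝ)^s * (1 + nsq k)^(-s) *
            ((1 + nsq (u+k))^(-s) + (1 + nsq u)^(-s))) := ENNReal.ofReal_le_ofReal hreal
      _ = cK * (E (u+k) + E u) := by
          rw [hcK, hE]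
          dsimp only
          rw [ENNReal.ofReal_mul (by positivity), ENNReal.ofReal_add (by positivity) (by positivity)]
  -- product factorization helper
  have hprod : ∀ g h : ℤ → ℝ≥0∞, ∑' v : ℤ × ℤ, g v.1 * h v.2 = (∑' n, g n) * (∑' n, h n) := by
    intro g h
    rw [ENNReal.tsum_prod']
    simp only
    calc ∑' (a : ℤ), ∑' (b : ℤ), g a * h b = ∑' (a : ℤ), g a * ∑' (b : ℤ), h b := by
          congr 1; funext a; exact ENNReal.tsum_mul_left
      _ = (∑' n, g n) * (∑' n, h n) := ENNReal.tsum_mul_right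
  -- 1-D ψ sum bound
  have hψsum : ∑' n : ℤ, ψ n ≤ ENNReal.ofReal ((1 + 2/(1-s)) * L^(1-s)) := by
    rw [tsum_eq_sum (s := Finset.Icc (-(M:ℤ)) (M:ℤ))
      (by intro b hb; rw [hψ]; exact if_neg hb)]
    have hcongr : ∑ n ∈ Finset.Icc (-(M:ℤ)) (M:ℤ), ψ n
        = ∑ n ∈ Finset.Icc (-(M:ℤ)) (M:ℤ), ENNReal.ofReal ((1+(n:ℝ)^2) ^ (-(s/2))) := by
      apply Finset.sum_congr rfl
      intro n hn
      rw [hψ]; dsimp only; rw [if_pos hn, hφ]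
    rw [hcongr, ← ENNReal.ofReal_sum_of_nonneg
      (fun n _ => Real.rpow_nonneg (by positivity) _)]
    apply ENNReal.ofReal_le_ofReal
    have hM' : (M:ℝ)^(1-s) ≤ L^(1-s) := Real.rpow_le_rpow (by positivity) hML h1s.le
    have hL1 : (1:ℝ) ≤ L^(1-s) := Real.one_le_rpow hL h1s.le
    calc ∑ n ∈ Finset.Icc (-(M:ℤ)) (M:ℤ), (1+(n:ℝ)^2) ^ (-(s/2))
        ≤ 1 + 2/(1-s) * (M:ℝ)^(1-s) := tck_oneD s hs0 hs1 M
      _ ≤ L^(1-s) + 2/(1-s) * L^(1-s) := by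
          have := mul_le_mul_of_nonneg_left hM' (div_nonneg (by norm_num : (0:ℝ) ≤ 2) h1s.le)
          linarith
      _ = (1 + 2/(1-s)) * L^(1-s) := by ring
  -- 1-D χ sum bound
  have hχsum : ∀ a : ℤ, ∑' n : ℤ, χ a n ≤ ENNReal.ofReal (3*L) := by
    intro a
    rw [tsum_eq_sum (s := Finset.Icc (a-(M:ℤ)) (a+(M:ℤ)))
      (by intro b hb; rw [hχ]; exact if_neg hb)]
    have hcongr : ∑ n ∈ Finset.Icc (a-(M:ℤ)) (a+(M:ℤ)), χ a n
        = ∑ n ∈ Finset.Icc (a-(M:ℤ)) (a+(M:ℤ)), (1:ℝ≥0∞) := by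
      apply Finset.sum_congr rfl
      intro n hn
      rw [hχ]; dsimp only; rw [if_pos hn]
    rw [hcongr, Finset.sum_const, Int.card_Icc]
    have hcard : (a + (M:ℤ) + 1 - (a - (M:ℤ))).toNat = 2*M+1 := by omega
    rw [hcard, nsmul_eq_mul, mul_one, ← ENNReal.ofReal_natCast]
    apply ENNReal.ofReal_le_ofReal
    push_cast
    linarith
  -- the shifted indicator function
  set H : ℤ × ℤ → ℝ≥0∞ := fun v => if 1 + nsq (v - k) ≤ L^2 then E v else 0 with hH
  have hHpt : ∀ v : ℤ × ℤ, H v ≤ ψ v.1 * ψ v.2 + χ k.1 v.1 * χ k.2 v.2 * cL := by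
    intro v
    rw [hH]; dsimp only
    by_cases hv : 1 + nsq (v - k) ≤ L^2
    · rw [if_pos hv]
      obtain ⟨h1, h2⟩ := hbox (v - k) hv
      rw [Finset.mem_Icc] at h1 h2
      have hχ1 : χ k.1 v.1 = 1 := by
        rw [hχ]; dsimp only
        rw [if_pos]
        rw [Finset.mem_Icc]
        have e1 : (v - k).1 = v.1 - k.1 := rfl
        rw [e1] at h1
        omega
      have hχ2 : χ k.2 v.2 = 1 := by
        rw [hχ]; dsimp only
        rw [if_pos]
        rw [Finset.mem_Icc]
        have e2 : (v - k).2 = v.2 - k.2 := rfl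
        rw [e2] at h2
        omega
      by_cases hv2 : 1 + nsq v ≤ L^2
      · exact le_trans (hEψ v hv2) le_self_add
      · have hvl : L^2 ≤ 1 + nsq v := by linarith [lt_of_not_ge hv2]
        have hEcL : E v ≤ cL := by
          rw [hE, hcL]; dsimp only
          apply ENNReal.ofReal_le_ofReal
          exact Real.rpow_le_rpow_of_nonpos (by positivity) hvl (by linarith)
        calc E v ≤ cL := hEcL
          _ = χ k.1 v.1 * χ k.2 v.2 * cL := by rw [hχ1, hχ2, one_mul, one_mul]
          _ ≤ ψ v.1 * ψ v.2 + χ k.1 v.1 * χ k.2 v.2 * cL := le_add_self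
    · rw [if_neg hv]; exact zero_le
  -- main chain
  have hsubty : ∑' u : {u : ℤ × ℤ // 1 + nsq u ≤ L ^ 2},
      ENNReal.ofReal ((1 + nsq (u.1 + k)) ^ (-s) * (1 + nsq u.1) ^ (-s))
      = ∑' u : ℤ × ℤ, S.indicator
        (fun u => ENNReal.ofReal ((1 + nsq (u + k)) ^ (-s) * (1 + nsq u) ^ (-s))) u :=
    tsum_subtype S (fun u => ENNReal.ofReal ((1 + nsq (u + k)) ^ (-s) * (1 + nsq u) ^ (-s)))
  rw [hsubty]
  -- step 1: pointwise
  have step1 : ∑' u : ℤ × ℤ, S.indicator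
        (fun u => ENNReal.ofReal ((1 + nsq (u + k)) ^ (-s) * (1 + nsq u) ^ (-s))) u
      ≤ cK * ((∑' u : ℤ × ℤ, H (u + k)) + ∑' u : ℤ × ℤ, S.indicator E u) := by
    rw [← ENNReal.tsum_add, ← ENNReal.tsum_mul_left]
    apply ENNReal.tsum_le_tsum
    intro u
    by_cases hu : u ∈ S
    · rw [Set.indicator_of_mem hu, Set.indicator_of_mem hu]
      have hHu : H (u + k) = E (u + k) := by
        rw [hH]; dsimp only
        rw [add_sub_cancel_right]
        exact if_pos hu
      rw [hHu]
      exact hFpt u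
    · rw [Set.indicator_of_notMem hu, Set.indicator_of_notMem hu]
      exact zero_le
  -- step 2: shift
  have step2 : ∑' u : ℤ × ℤ, H (u + k) = ∑' v : ℤ × ℤ, H v := by
    have := Equiv.tsum_eq (Equiv.addRight k) H
    simpa using this
  -- step 3: bound the two sums
  have hSE : ∑' u : ℤ × ℤ, S.indicator E u ≤ (∑' n, ψ n) * (∑' n, ψ n) := by
    rw [← hprod ψ ψ]
    apply ENNReal.tsum_le_tsum
    intro u
    by_cases hu : u ∈ S
    · rw [Set.indicator_of_mem hu]; exact hEψ u hu
    · rw [Set.indicator_of_notMem hu]; exact zero_le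
  have hHsum : ∑' v : ℤ × ℤ, H v
      ≤ (∑' n, ψ n) * (∑' n, ψ n) + ((∑' n, χ k.1 n) * (∑' n, χ k.2 n)) * cL := by
    calc ∑' v : ℤ × ℤ, H v ≤ ∑' v : ℤ × ℤ, (ψ v.1 * ψ v.2 + χ k.1 v.1 * χ k.2 v.2 * cL) :=
          ENNReal.tsum_le_tsum hHpt
      _ = (∑' v : ℤ × ℤ, ψ v.1 * ψ v.2) + ∑' v : ℤ × ℤ, (χ k.1 v.1 * χ k.2 v.2) * cL :=
          ENNReal.tsum_add
      _ = (∑' n, ψ n) * (∑' n, ψ n) + (∑' v : ℤ × ℤ, χ k.1 v.1 * χ k.2 v.2) * cL := by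
          rw [hprod ψ ψ, ENNReal.tsum_mul_right]
      _ = (∑' n, ψ n) * (∑' n, ψ n) + ((∑' n, χ k.1 n) * (∑' n, χ k.2 n)) * cL := by
          rw [hprod (χ k.1) (χ k.2)]
  -- combine
  have hψr : (0:ℝ) ≤ (1 + 2/(1-s)) * L^(1-s) := by positivity
  have hcLr : (0:ℝ) ≤ (L^2)^(-s) := Real.rpow_nonneg (by positivity) _
  have h3L : (0:ℝ) ≤ 3*L := by linarith
  have hcKr : (0:ℝ) ≤ (4:ℝ)^s * (1 + nsq k)^(-s) := by
    have h1 := Real.rpow_nonneg (by norm_num : (0:ℝ) ≤ 4) s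
    have h2 := Real.rpow_nonneg (by linarith [hnsq k] : (0:ℝ) ≤ 1 + nsq k) (-s)
    positivity
  set Bψ : ℝ≥0∞ := ENNReal.ofReal ((1 + 2/(1-s)) * L^(1-s)) with hBψ
  set Bχ : ℝ≥0∞ := ENNReal.ofReal (3*L) with hBχ
  have final : cK * ((∑' u : ℤ × ℤ, H (u + k)) + ∑' u : ℤ × ℤ, S.indicator E u)
      ≤ cK * ((Bψ * Bψ + (Bχ * Bχ) * cL) + Bψ * Bψ) := by
    refine mul_le_mul' le_rfl ?_
    rw [step2]
    refine le_trans (add_le_add hHsum hSE) ?_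
    apply add_le_add
    apply add_le_add
    · exact mul_le_mul' hψsum hψsum
    · exact mul_le_mul' (mul_le_mul' (hχsum k.1) (hχsum k.2)) (le_refl cL)
    · exact mul_le_mul' hψsum hψsum
  refine le_trans step1 (le_trans final ?_)
  -- collapse to a single ofReal
  rw [hBψ, hBχ, hcL, hcK]
  rw [← ENNReal.ofReal_mul hψr, ← ENNReal.ofReal_mul h3L,
    ← ENNReal.ofReal_mul (mul_nonneg h3L h3L),
    ← ENNReal.ofReal_add (mul_nonneg hψr hψr) (mul_nonneg (mul_nonneg h3L h3L) hcLr),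
    ← ENNReal.ofReal_add (add_nonneg (mul_nonneg hψr hψr)
        (mul_nonneg (mul_nonneg h3L h3L) hcLr)) (mul_nonneg hψr hψr),
    ← ENNReal.ofReal_mul hcKr]
  apply ENNReal.ofReal_le_ofReal
  -- pure real arithmetic
  have hLsq : (L^(1-s)) * (L^(1-s)) = L^(2-2*s) := by
    rw [← Real.rpow_add hL0]
    congr 1; ring
  have e1 : (L^2:ℝ)^(-s) = L^((2:ℝ)*(-s)) := by
    rw [← Real.rpow_natCast L 2, ← Real.rpow_mul hL0.le]
    norm_num
  have e4 : L^(2:ℝ) = L * L := by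
    rw [show (2:ℝ) = ((2:ℕ):ℝ) from by norm_num, Real.rpow_natCast]
    ring
  have hL2s : 3*L*(3*L) * (L^2)^(-s) = 9 * L^(2-2*s) := by
    calc 3*L*(3*L)*(L^2)^(-s) = 9*(L*L*L^((2:ℝ)*(-s))) := by rw [e1]; ring
      _ = 9*(L^(2:ℝ)*L^((2:ℝ)*(-s))) := by rw [e4]
      _ = 9*L^((2:ℝ)+(2:ℝ)*(-s)) := by rw [← Real.rpow_add hL0]
      _ = 9*L^(2-2*s) := by rw [show (2:ℝ)+(2:ℝ)*(-s) = 2-2*s from by ring]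
  have hsq : (1 + 2/(1-s)) * L^(1-s) * ((1 + 2/(1-s)) * L^(1-s))
      = (1 + 2/(1-s))^2 * L^(2-2*s) := by
    rw [show (1 + 2/(1-s)) * L^(1-s) * ((1 + 2/(1-s)) * L^(1-s))
      = (1 + 2/(1-s))^2 * ((L^(1-s)) * (L^(1-s))) from by ring, hLsq]
  rw [hsq, hL2s]
  apply le_of_eq
  ring
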